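/- arXiv:cond-mat/9512169 — 2 statements merged into one kernel-verified Lean document; each statement's English description precedes it below -/
import Mathlib

section
/- Twist-operator energy estimate (finite-volume step of the Yamanaka–Oshikawa–Affleck theorem). Consider the Hubbard model on the periodic chain Λ = {1, …, N} with t_{x,y} = 0 whenever the distance between x and y on the ring exceeds a fixed range R, and with |t_{x,y}| ≤ t̄ for all x, y. Let Φ_GS be any normalized ground state of H in the sector with N̂_e = N_e, with ground energy E_GS, and let U_tw = exp[2πi Σ_{x=1}^{N} (x/N) n_{x,↑}] be the unitary twist operator. Then the normalized state Ψ = U_tw Φ_GS satisfies ⟨Ψ, H Ψ⟩ − E_GS ≤ C/N, where the constant C depends only on R, t̄, and the density ν = N_e/N, and not otherwise on N. -/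
/-!  Common framework: the Hubbard model on a finite lattice, formalized
concretely on the fermionic Fock space realized as `Finset (Λ × Bool) → ℂ`. -/

noncomputable section
namespace Hubbard

open scoped BigOperators

variable (Λ : Type*) [Fintype Λ] [LinearOrder Λ]

/-- Spin indices: `true` = ↑, `false` = ↓. -/
abbrev Spin := Bool

/-- The fermionic Fock space over the set of modes `Λ × Spin`,
realized concretely in the occupation-number basis. -/
abbrev FockSpace := Finset (Λ × Spin) → ℂ

variable {Λ}

/-- An auxiliary (lexicographic) strict order on modes, fixing the sign
convention of the fermionic operators. -/
def mlt (j i : Λ × Spin) : Prop := j.1 < i.1 ∨ (j.1 = i.1 ∧ j.2 < i.2)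

instance (i : Λ × Spin) : DecidablePred (fun j => mlt j i) := fun j =>
  inferInstanceAs (Decidable (j.1 < i.1 ∨ (j.1 = i.1 ∧ j.2 < i.2)))

/-- The fermionic sign `(-1)^{#{j ∈ S : j < i}}`. -/
def sgn (i : Λ × Spin) (S : Finset (Λ × Spin)) : ℂ :=
  (-1 : ℂ) ^ (S.filter (fun j => mlt j i)).card

/-- The annihilation operator `c_{x,σ}` for the mode `i = (x,σ)`. -/
def cop (i : Λ × Spin) : Module.End ℂ (FockSpace Λ) where
  toFun ψ := fun S => if i ∈ S then 0 else sgn i S * ψ (insert i S)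
  map_add' ψ φ := by funext S; by_cases h : i ∈ S <;> simp [h, mul_add]
  map_smul' a ψ := by
    funext S; by_cases h : i ∈ S <;> simp [h]
    ring
/-- The creation operator `c†_{x,σ}` for the mode `i = (x,σ)`. -/
def cdag (i : Λ × Spin) : Module.End ℂ (FockSpace Λ) where
  toFun ψ := fun S => if i ∈ S then sgn i (S.erase i) * ψ (S.erase i) else 0
  map_add' ψ φ := by funext S; by_cases h : i ∈ S <;> simp [h, mul_add]
  map_smul' a ψ := by
    funext S; by_cases h : i ∈ S <;> simp [h]
    ring

/-- The number operator `n_{x,σ} = c†_{x,σ} c_{x,σ}`. -/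
def nop (i : Λ × Spin) : Module.End ℂ (FockSpace Λ) := cdag i ∘ₗ cop i

/-- The total electron number operator `N̂_e`. -/
def Nhat : Module.End ℂ (FockSpace Λ) := ∑ i : Λ × Spin, nop i

/-- The number operator of up-spin electrons, `N̂_↑`. -/
def NhatUp : Module.End ℂ (FockSpace Λ) := ∑ x : Λ, nop (x, true)

/-- The hopping Hamiltonian `H_hop = Σ_{x,y,σ} t_{x,y} c†_{x,σ} c_{y,σ}`. -/
def Hhop (t : Λ → Λ → ℝ) : Module.End ℂ (FockSpace Λ) :=
  ∑ x : Λ, ∑ y : Λ, ∑ σ : Spin, (t x y : ℂ) • (cdag (x, σ) ∘ₗ cop (y, σ))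

/-- The interaction Hamiltonian `H_int = Σ_x U_x n_{x,↑} n_{x,↓}`. -/
def Hint (U : Λ → ℝ) : Module.End ℂ (FockSpace Λ) :=
  ∑ x : Λ, (U x : ℂ) • (nop (x, true) ∘ₗ nop (x, false))

/-- The Hubbard Hamiltonian `H = H_hop + H_int`. -/
def Ham (t : Λ → Λ → ℝ) (U : Λ → ℝ) : Module.End ℂ (FockSpace Λ) := Hhop t + Hint U

/-- The Pauli matrices `p^(α)`, `α = 1,2,3` (here indexed by `Fin 3`);
rows/columns indexed by spins (`true` = ↑ first). -/
def pauli (α : Fin 3) (s τ : Spin) : ℂ :=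
  if α = 0 then (if s = τ then 0 else 1)
  else if α = 1 then (if s = τ then 0 else if s then -Complex.I else Complex.I)
  else (if s = τ then (if s then 1 else -1) else 0)

/-- The local spin operator `S^(α)_x = (1/2) Σ_{σ,τ} c†_{x,σ} (p^(α))_{σ,τ} c_{x,τ}`. -/
def spinOp (α : Fin 3) (x : Λ) : Module.End ℂ (FockSpace Λ) :=
  (1 / 2 : ℂ) • ∑ s : Spin, ∑ τ : Spin, pauli α s τ • (cdag (x, s) ∘ₗ cop (x, τ))

/-- The total spin operator `S^(α)_tot`. -/
def Stot (α : Fin 3) : Module.End ℂ (FockSpace Λ) := ∑ x : Λ, spinOp α x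

/-- The squared total spin `(Ŝ_tot)²`. -/
def StotSq : Module.End ℂ (FockSpace Λ) := ∑ α : Fin 3, Stot α ∘ₗ Stot α

/-- The spin-spin coupling `Ŝ_x · Ŝ_y`. -/
def SdotS (x y : Λ) : Module.End ℂ (FockSpace Λ) := ∑ α : Fin 3, spinOp α x ∘ₗ spinOp α y

/-- The inner product on the Fock space. -/
def fdot (ψ φ : FockSpace Λ) : ℂ := ∑ S : Finset (Λ × Spin), (starRingEnd ℂ) (ψ S) * φ S

/-- The vacuum vector `Φ_vac`. -/
def vac : FockSpace Λ := fun S => if S = ∅ then 1 else 0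

/-- The eigenspace of an operator for a real eigenvalue. -/
def eigR (A : Module.End ℂ (FockSpace Λ)) (μ : ℝ) : Submodule ℂ (FockSpace Λ) :=
  Module.End.eigenspace A (μ : ℂ)

/-- The simultaneous eigenspace: energy `E` within the `N_e`-electron sector. -/
def sector (H : Module.End ℂ (FockSpace Λ)) (Ne : ℕ) (E : ℝ) : Submodule ℂ (FockSpace Λ) :=
  eigR H E ⊓ eigR Nhat (Ne : ℝ)

/-- The set of energy eigenvalues in the `N_e`-electron sector. -/
def energies (H : Module.End ℂ (FockSpace Λ)) (Ne : ℕ) : Set ℝ :=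
  {E | sector H Ne E ≠ ⊥}

/-- The ground-state energy in the `N_e`-electron sector. -/
def groundEnergy (H : Module.End ℂ (FockSpace Λ)) (Ne : ℕ) : ℝ := sInf (energies H Ne)

/-- The space of ground states in the `N_e`-electron sector. -/
def groundSpace (H : Module.End ℂ (FockSpace Λ)) (Ne : ℕ) : Submodule ℂ (FockSpace Λ) :=
  sector H Ne (groundEnergy H Ne)

/-- `E_min(S)`: the lowest energy among states with `N̂_e = N_e` and total spin `S`,
i.e. `(Ŝ_tot)² = S(S+1)`. -/
def Emin (H : Module.End ℂ (FockSpace Λ)) (Ne : ℕ) (S : ℝ) : ℝ :=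
  sInf {E : ℝ | eigR H E ⊓ eigR Nhat (Ne : ℝ) ⊓ eigR StotSq (S * (S + 1)) ≠ ⊥}

/-- The orthogonal projection onto the hard-core subspace (no doubly occupied sites). -/
def hcProj : Module.End ℂ (FockSpace Λ) where
  toFun ψ := fun S => if ∃ x : Λ, (x, true) ∈ S ∧ (x, false) ∈ S then 0 else ψ S
  map_add' ψ φ := by
    funext S; by_cases h : ∃ x : Λ, (x, true) ∈ S ∧ (x, false) ∈ S <;> simp [h]
  map_smul' a ψ := by
    funext S; by_cases h : ∃ x : Λ, (x, true) ∈ S ∧ (x, false) ∈ S <;> simp [h]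

/-- The `U = ∞` (hard-core) Hamiltonian `H_∞ = P H_hop P`. -/
def Hinf (t : Λ → Λ → ℝ) : Module.End ℂ (FockSpace Λ) := hcProj ∘ₗ Hhop t ∘ₗ hcProj

/-- Energy-`E` eigenspace inside the `N_e`-electron hard-core subspace. -/
def hcSector (H : Module.End ℂ (FockSpace Λ)) (Ne : ℕ) (E : ℝ) : Submodule ℂ (FockSpace Λ) :=
  eigR H E ⊓ eigR Nhat (Ne : ℝ) ⊓ eigR hcProj 1

/-- Energy eigenvalues in the `N_e`-electron hard-core subspace. -/
def hcEnergies (H : Module.End ℂ (FockSpace Λ)) (Ne : ℕ) : Set ℝ := {E | hcSector H Ne E ≠ ⊥}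

/-- Ground energy in the `N_e`-electron hard-core subspace. -/
def hcGroundEnergy (H : Module.End ℂ (FockSpace Λ)) (Ne : ℕ) : ℝ := sInf (hcEnergies H Ne)

/-- Ground states in the `N_e`-electron hard-core subspace. -/
def hcGroundSpace (H : Module.End ℂ (FockSpace Λ)) (Ne : ℕ) : Submodule ℂ (FockSpace Λ) :=
  hcSector H Ne (hcGroundEnergy H Ne)

/-- The orthogonal projection onto the `N_e`-electron sector. -/
def numProj (Ne : ℕ) : Module.End ℂ (FockSpace Λ) where
  toFun ψ := fun S => if S.card = Ne then ψ S else 0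
  map_add' ψ φ := by funext S; by_cases h : S.card = Ne <;> simp [h]
  map_smul' a ψ := by funext S; by_cases h : S.card = Ne <;> simp [h]

/-- The matrix of an operator in the occupation-number basis. -/
def toMat (A : Module.End ℂ (FockSpace Λ)) :
    Matrix (Finset (Λ × Spin)) (Finset (Λ × Spin)) ℂ :=
  LinearMap.toMatrix (Pi.basisFun ℂ (Finset (Λ × Spin)))
    (Pi.basisFun ℂ (Finset (Λ × Spin))) A

/-- The canonical Gibbs expectation `Tr[A e^{-βH}]/Tr[e^{-βH}]`, the traces being taken
over the `N_e`-electron sector (realized with the projection `numProj Ne`). -/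
def canonExpect (H : Module.End ℂ (FockSpace Λ)) (β : ℝ) (Ne : ℕ)
    (A : Module.End ℂ (FockSpace Λ)) : ℂ :=
  Matrix.trace (toMat (numProj Ne ∘ₗ A ∘ₗ numProj Ne) *
      NormedSpace.exp ((-β : ℂ) • toMat (numProj Ne ∘ₗ H ∘ₗ numProj Ne))) /
    Matrix.trace (toMat (numProj Ne) *
      NormedSpace.exp ((-β : ℂ) • toMat (numProj Ne ∘ₗ H ∘ₗ numProj Ne)))

/-- The pair operator `c†_{x,↑} c†_{x,↓} c_{y,↑} c_{y,↓} + h.c.`. -/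
def pairOp (x y : Λ) : Module.End ℂ (FockSpace Λ) :=
  cdag (x, true) ∘ₗ cdag (x, false) ∘ₗ cop (y, true) ∘ₗ cop (y, false) +
    cdag (y, false) ∘ₗ cdag (y, true) ∘ₗ cop (x, false) ∘ₗ cop (x, true)


/-- The unitary twist operator
`U_tw = exp[2πi Σ_{x=1}^{N} (x/N) n_{x,↑}]` on the chain `{1, …, N}` (realized as
`Fin N`, the site `x` corresponding to the index of value `x − 1`); it is diagonal
in the occupation-number basis. -/
def Utw (N : ℕ) : Module.End ℂ (FockSpace (Fin N)) where
  toFun ψ := fun S =>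
    Complex.exp (2 * Real.pi * Complex.I *
        (∑ m ∈ S.filter (fun m => m.2 = true), ((m.1.val : ℂ) + 1)) / N) * ψ S
  map_add' ψ φ := by funext S; simp [mul_add]
  map_smul' a ψ := by funext S; simp; ring

set_option linter.unusedSectionVars false
/-! ### Auxiliary lemmas -/

open scoped ComplexConjugate

section Aux
variable {Λ : Type*} [Fintype Λ] [LinearOrder Λ]

lemma sgn_mul_self (i : Λ × Spin) (S : Finset (Λ × Spin)) : sgn i S * sgn i S = 1 := by
  rw [sgn, ← pow_add, ← two_mul, pow_mul]
  simp

lemma conj_sgn (i : Λ × Spin) (S : Finset (Λ × Spin)) : conj (sgn i S) = sgn i S := by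
  rw [sgn, map_pow]
  simp

lemma cop_apply (i : Λ × Spin) (ψ : FockSpace Λ) (S : Finset (Λ × Spin)) :
    cop i ψ S = if i ∈ S then 0 else sgn i S * ψ (insert i S) := rfl

lemma cdag_apply (i : Λ × Spin) (ψ : FockSpace Λ) (S : Finset (Λ × Spin)) :
    cdag i ψ S = if i ∈ S then sgn i (S.erase i) * ψ (S.erase i) else 0 := rfl

lemma hop_apply (i j : Λ × Spin) (ψ : FockSpace Λ) (S : Finset (Λ × Spin)) :
    (cdag i ∘ₗ cop j) ψ S =
      if i ∈ S ∧ j ∉ S.erase i then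
        (sgn i (S.erase i) * sgn j (S.erase i)) * ψ (insert j (S.erase i))
      else 0 := by
  rw [LinearMap.comp_apply, cdag_apply]
  by_cases hi : i ∈ S
  · rw [cop_apply]
    by_cases hj : j ∈ S.erase i <;> simp [hi, hj, mul_assoc]
  · simp [hi]

lemma nop_apply (i : Λ × Spin) (ψ : FockSpace Λ) (S : Finset (Λ × Spin)) :
    nop i ψ S = if i ∈ S then ψ S else 0 := by
  rw [nop, hop_apply]
  by_cases hi : i ∈ S
  · simp [hi, Finset.notMem_erase, Finset.insert_erase hi, ← mul_assoc, sgn_mul_self]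
  · simp [hi]

lemma Nhat_apply (ψ : FockSpace Λ) (S : Finset (Λ × Spin)) :
    Nhat ψ S = (S.card : ℂ) * ψ S := by
  rw [Nhat]
  rw [LinearMap.sum_apply]
  rw [Finset.sum_apply]
  have : ∀ i : Λ × Spin, nop i ψ S = if i ∈ S then ψ S else 0 := fun i => nop_apply i ψ S
  simp only [this]
  rw [Finset.sum_ite_mem, Finset.univ_inter, Finset.sum_const]
  simp [mul_comm]

lemma Hint_apply (U : Λ → ℝ) (ψ : FockSpace Λ) (S : Finset (Λ × Spin)) :
    Hint U ψ S =
      (∑ x : Λ, if (x, true) ∈ S ∧ (x, false) ∈ S then (U x : ℂ) else 0) * ψ S := by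
  rw [Hint, LinearMap.sum_apply, Finset.sum_apply, Finset.sum_mul]
  refine Finset.sum_congr rfl fun x _ => ?_
  rw [LinearMap.smul_apply, Pi.smul_apply, LinearMap.comp_apply, nop_apply, smul_eq_mul]
  by_cases h1 : (x, true) ∈ S
  · rw [nop_apply]
    by_cases h2 : (x, false) ∈ S <;> simp [h1, h2]
  · simp [h1]

end Aux
set_option linter.unusedSectionVars false

section Aux2
variable {Λ : Type*} [Fintype Λ] [LinearOrder Λ]

lemma fdot_sum_right {κ : Type*} (s : Finset κ) (ψ : FockSpace Λ) (f : κ → FockSpace Λ) :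
    fdot ψ (∑ k ∈ s, f k) = ∑ k ∈ s, fdot ψ (f k) := by
  simp only [fdot, Finset.sum_apply, Finset.mul_sum]
  exact Finset.sum_comm

lemma fdot_smul_right (c : ℂ) (ψ φ : FockSpace Λ) : fdot ψ (c • φ) = c * fdot ψ φ := by
  simp only [fdot, Pi.smul_apply, smul_eq_mul, Finset.mul_sum]
  refine Finset.sum_congr rfl fun S _ => by ring

lemma conj_fdot (ψ φ : FockSpace Λ) : conj (fdot ψ φ) = fdot φ ψ := by
  simp only [fdot, map_sum, map_mul, RingHomCompTriple.comp_apply, Complex.conj_conj, RingHom.id_apply]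
  refine Finset.sum_congr rfl fun S _ => by ring

lemma fdot_cdag (i : Λ × Spin) (ψ χ : FockSpace Λ) :
    fdot ψ (cdag i χ) = fdot (cop i ψ) χ := by
  rw [fdot, fdot]
  rw [← Finset.sum_filter_add_sum_filter_not Finset.univ (fun S => i ∈ S)
    (fun S => conj (ψ S) * cdag i χ S)]
  rw [← Finset.sum_filter_add_sum_filter_not Finset.univ (fun S => i ∈ S)
    (fun S => conj (cop i ψ S) * χ S)]
  have h1 : ∑ S ∈ Finset.univ.filter (fun S => ¬ i ∈ S), conj (ψ S) * cdag i χ S = 0 := by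
    refine Finset.sum_eq_zero fun S hS => ?_
    rw [Finset.mem_filter] at hS
    rw [cdag_apply, if_neg hS.2, mul_zero]
  have h2 : ∑ S ∈ Finset.univ.filter (fun S => i ∈ S), conj (cop i ψ S) * χ S = 0 := by
    refine Finset.sum_eq_zero fun S hS => ?_
    rw [Finset.mem_filter] at hS
    rw [cop_apply, if_pos hS.2, map_zero, zero_mul]
  rw [h1, h2, add_zero, zero_add]
  refine Finset.sum_bij' (fun S _ => S.erase i) (fun S _ => insert i S) ?_ ?_ ?_ ?_ ?_
  · intro S hS
    rw [Finset.mem_filter] at hS ⊢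
    exact ⟨Finset.mem_univ _, Finset.notMem_erase _ _⟩
  · intro S hS
    rw [Finset.mem_filter] at hS ⊢
    exact ⟨Finset.mem_univ _, Finset.mem_insert_self _ _⟩
  · intro S hS
    rw [Finset.mem_filter] at hS
    exact Finset.insert_erase hS.2
  · intro S hS
    rw [Finset.mem_filter] at hS
    exact Finset.erase_insert hS.2
  · intro S hS
    rw [Finset.mem_filter] at hS
    rw [cdag_apply, if_pos hS.2, cop_apply, if_neg (Finset.notMem_erase _ _),
      Finset.insert_erase hS.2, map_mul, conj_sgn]
    ring

lemma fdot_hop (i j : Λ × Spin) (ψ φ : FockSpace Λ) :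
    fdot ψ ((cdag i ∘ₗ cop j) φ) = fdot (cop i ψ) (cop j φ) := by
  rw [LinearMap.comp_apply, fdot_cdag]

lemma fdot_hop_left (i j : Λ × Spin) (ψ φ : FockSpace Λ) :
    fdot ((cdag j ∘ₗ cop i) ψ) φ = fdot (cop i ψ) (cop j φ) := by
  rw [← conj_fdot φ, fdot_hop, conj_fdot]

end Aux2
section Aux3
variable {Λ : Type*} [Fintype Λ] [LinearOrder Λ]

lemma fdot_sum_left {κ : Type*} (s : Finset κ) (f : κ → FockSpace Λ) (φ : FockSpace Λ) :
    fdot (∑ k ∈ s, f k) φ = ∑ k ∈ s, fdot (f k) φ := by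
  rw [← conj_fdot, fdot_sum_right, map_sum]
  exact Finset.sum_congr rfl fun k _ => conj_fdot _ _

lemma fdot_Hhop (t : Λ → Λ → ℝ) (ψ φ : FockSpace Λ) :
    fdot ψ (Hhop t φ) =
      ∑ x : Λ, ∑ y : Λ, ∑ σ : Spin,
        (t x y : ℂ) * fdot ψ ((cdag (x, σ) ∘ₗ cop (y, σ)) φ) := by
  rw [Hhop]
  rw [LinearMap.sum_apply, fdot_sum_right]
  refine Finset.sum_congr rfl fun x _ => ?_
  rw [LinearMap.sum_apply, fdot_sum_right]
  refine Finset.sum_congr rfl fun y _ => ?_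
  rw [LinearMap.sum_apply, fdot_sum_right]
  refine Finset.sum_congr rfl fun σ _ => ?_
  rw [LinearMap.smul_apply, fdot_smul_right]

lemma fdot_Hint_symm (U : Λ → ℝ) (ψ φ : FockSpace Λ) :
    fdot (Hint U ψ) φ = fdot ψ (Hint U φ) := by
  rw [fdot, fdot]
  refine Finset.sum_congr rfl fun S _ => ?_
  rw [Hint_apply, Hint_apply, map_mul]
  have : conj (∑ x : Λ, if (x, true) ∈ S ∧ (x, false) ∈ S then (U x : ℂ) else 0) =
      ∑ x : Λ, if (x, true) ∈ S ∧ (x, false) ∈ S then (U x : ℂ) else 0 := by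
    rw [map_sum]
    refine Finset.sum_congr rfl fun x _ => ?_
    split <;> simp [Complex.conj_ofReal]
  rw [this]; ring

lemma fdot_Hhop_symm (t : Λ → Λ → ℝ) (hts : ∀ x y, t x y = t y x) (ψ φ : FockSpace Λ) :
    fdot (Hhop t ψ) φ = fdot ψ (Hhop t φ) := by
  rw [fdot_Hhop, Hhop, LinearMap.sum_apply, fdot_sum_left]
  rw [Finset.sum_comm]
  refine Finset.sum_congr rfl fun x _ => ?_
  rw [LinearMap.sum_apply, fdot_sum_left]
  refine Finset.sum_congr rfl fun y _ => ?_
  rw [LinearMap.sum_apply, fdot_sum_left]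
  refine Finset.sum_congr rfl fun σ _ => ?_
  rw [LinearMap.smul_apply]
  rw [← conj_fdot φ, fdot_smul_right, map_mul, conj_fdot, Complex.conj_ofReal]
  rw [fdot_hop_left, fdot_hop, hts x y]

lemma fdot_Ham_symm (t : Λ → Λ → ℝ) (U : Λ → ℝ) (hts : ∀ x y, t x y = t y x)
    (ψ φ : FockSpace Λ) : fdot (Ham t U ψ) φ = fdot ψ (Ham t U φ) := by
  rw [Ham, LinearMap.add_apply, LinearMap.add_apply]
  have h1 : fdot (Hhop t ψ + Hint U ψ) φ = fdot (Hhop t ψ) φ + fdot (Hint U ψ) φ := by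
    simp only [fdot, Pi.add_apply, map_add, add_mul, Finset.sum_add_distrib]
  have h2 : fdot ψ (Hhop t φ + Hint U φ) = fdot ψ (Hhop t φ) + fdot ψ (Hint U φ) := by
    simp only [fdot, Pi.add_apply, mul_add, Finset.sum_add_distrib]
  rw [h1, h2, fdot_Hhop_symm t hts, fdot_Hint_symm]

/-- Characterization of the `N_e`-sector in terms of supports. -/
lemma Nhat_eigen_iff (ψ : FockSpace Λ) (Ne : ℕ) :
    Nhat ψ = ((Ne : ℝ) : ℂ) • ψ ↔ ∀ S : Finset (Λ × Spin), S.card ≠ Ne → ψ S = 0 := by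
  constructor
  · intro h S hS
    have := congrFun h S
    rw [Nhat_apply, Pi.smul_apply, smul_eq_mul] at this
    have hne : (S.card : ℂ) ≠ ((Ne : ℝ) : ℂ) := by
      push_cast
      exact_mod_cast fun hc => hS (by exact_mod_cast hc)
    by_contra hψ
    exact hne (mul_right_cancel₀ hψ this)
  · intro h
    funext S
    rw [Nhat_apply, Pi.smul_apply, smul_eq_mul]
    by_cases hS : S.card = Ne
    · rw [hS]; push_cast; ring
    · rw [h S hS, mul_zero, mul_zero]

lemma Ham_support (t : Λ → Λ → ℝ) (U : Λ → ℝ) (Ne : ℕ) (ψ : FockSpace Λ)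
    (h : ∀ S : Finset (Λ × Spin), S.card ≠ Ne → ψ S = 0) :
    ∀ S : Finset (Λ × Spin), S.card ≠ Ne → Ham t U ψ S = 0 := by
  intro S hS
  rw [Ham, LinearMap.add_apply, Pi.add_apply, Hint_apply, h S hS, mul_zero, add_zero]
  rw [Hhop, LinearMap.sum_apply, Finset.sum_apply]
  refine Finset.sum_eq_zero fun x _ => ?_
  rw [LinearMap.sum_apply, Finset.sum_apply]
  refine Finset.sum_eq_zero fun y _ => ?_
  rw [LinearMap.sum_apply, Finset.sum_apply]
  refine Finset.sum_eq_zero fun σ _ => ?_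
  rw [LinearMap.smul_apply, Pi.smul_apply, smul_eq_mul, hop_apply]
  split
  · next hc =>
    have hcard : (insert (y, σ) (S.erase (x, σ))).card = S.card := by
      rw [Finset.card_insert_of_notMem hc.2, Finset.card_erase_of_mem hc.1]
      have : 1 ≤ S.card := Finset.card_pos.2 ⟨_, hc.1⟩
      omega
    rw [h _ (by rw [hcard]; exact hS), mul_zero, mul_zero]
  · rw [mul_zero]

end Aux3
section Aux4
variable {Λ : Type*} [Fintype Λ] [LinearOrder Λ]

lemma abs_sgn (i : Λ × Spin) (S : Finset (Λ × Spin)) : ‖sgn i S‖ = 1 := by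
  rw [sgn, norm_pow]
  simp

lemma fdot_self_eq (ψ : FockSpace Λ) :
    fdot ψ ψ = ((∑ S : Finset (Λ × Spin), Complex.normSq (ψ S) : ℝ) : ℂ) := by
  rw [fdot]
  push_cast
  exact Finset.sum_congr rfl fun S _ => (Complex.normSq_eq_conj_mul_self).symm ▸ rfl

lemma sum_normSq_eq_one (Φ : FockSpace Λ) (h : fdot Φ Φ = 1) :
    ∑ S : Finset (Λ × Spin), Complex.normSq (Φ S) = 1 := by
  have := fdot_self_eq Φ
  rw [h] at this
  exact_mod_cast this.symm

lemma insert_erase_inj (i j : Λ × Spin) {S₁ S₂ : Finset (Λ × Spin)}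
    (h1 : i ∈ S₁ ∧ j ∉ S₁.erase i) (h2 : i ∈ S₂ ∧ j ∉ S₂.erase i)
    (heq : insert j (S₁.erase i) = insert j (S₂.erase i)) : S₁ = S₂ := by
  have k1 : S₁ = insert i ((insert j (S₁.erase i)).erase j) := by
    rw [Finset.erase_insert h1.2, Finset.insert_erase h1.1]
  have k2 : S₂ = insert i ((insert j (S₂.erase i)).erase j) := by
    rw [Finset.erase_insert h2.2, Finset.insert_erase h2.1]
  rw [k1, k2, heq]

lemma hop_bound (i j : Λ × Spin) (Φ : FockSpace Λ) (h : fdot Φ Φ = 1) :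
    ‖fdot Φ ((cdag i ∘ₗ cop j) Φ)‖ ≤ 1 := by
  have hn := sum_normSq_eq_one Φ h
  rw [fdot]
  refine le_trans (norm_sum_le _ _) ?_
  have hterm : ∀ S : Finset (Λ × Spin),
      ‖conj (Φ S) * (cdag i ∘ₗ cop j) Φ S‖ ≤
        if i ∈ S ∧ j ∉ S.erase i then
          (Complex.normSq (Φ S) + Complex.normSq (Φ (insert j (S.erase i)))) / 2
        else 0 := by
    intro S
    rw [hop_apply]
    split
    · next hc =>
      rw [norm_mul, norm_mul, norm_mul, abs_sgn, abs_sgn, Complex.norm_conj]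
      simp only [one_mul]
      have h1 : ‖Φ S‖ * ‖Φ (insert j (S.erase i))‖ ≤
          (‖Φ S‖ ^ 2 + ‖Φ (insert j (S.erase i))‖ ^ 2) / 2 := by
        nlinarith [sq_nonneg (‖Φ S‖ - ‖Φ (insert j (S.erase i))‖)]
      rw [Complex.sq_norm, Complex.sq_norm] at h1
      exact h1
    · simp
  refine le_trans (Finset.sum_le_sum fun S _ => hterm S) ?_
  have split : ∑ S : Finset (Λ × Spin),
      (if i ∈ S ∧ j ∉ S.erase i then
        (Complex.normSq (Φ S) + Complex.normSq (Φ (insert j (S.erase i)))) / 2 else 0) =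
      (∑ S : Finset (Λ × Spin), (if i ∈ S ∧ j ∉ S.erase i then Complex.normSq (Φ S) else 0)) / 2 +
      (∑ S : Finset (Λ × Spin),
        (if i ∈ S ∧ j ∉ S.erase i then Complex.normSq (Φ (insert j (S.erase i))) else 0)) / 2 := by
    rw [Finset.sum_div, Finset.sum_div, ← Finset.sum_add_distrib]
    refine Finset.sum_congr rfl fun S _ => ?_
    split <;> simp [add_div]
  rw [split]
  have b1 : ∑ S : Finset (Λ × Spin), (if i ∈ S ∧ j ∉ S.erase i then Complex.normSq (Φ S) else 0)
      ≤ 1 := by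
    rw [← hn]
    refine Finset.sum_le_sum fun S _ => ?_
    split
    · exact le_rfl
    · exact Complex.normSq_nonneg _
  have b2 : ∑ S : Finset (Λ × Spin),
      (if i ∈ S ∧ j ∉ S.erase i then Complex.normSq (Φ (insert j (S.erase i))) else 0) ≤ 1 := by
    rw [Finset.sum_ite, Finset.sum_const_zero, add_zero]
    have hinj : ∀ S₁ ∈ Finset.univ.filter (fun S : Finset (Λ × Spin) => i ∈ S ∧ j ∉ S.erase i),
        ∀ S₂ ∈ Finset.univ.filter (fun S : Finset (Λ × Spin) => i ∈ S ∧ j ∉ S.erase i),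
        insert j (S₁.erase i) = insert j (S₂.erase i) → S₁ = S₂ := by
      intro S₁ hS₁ S₂ hS₂ heq
      rw [Finset.mem_filter] at hS₁ hS₂
      exact insert_erase_inj i j hS₁.2 hS₂.2 heq
    rw [← Finset.sum_image (f := fun W => Complex.normSq (Φ W)) hinj]
    rw [← hn]
    exact Finset.sum_le_sum_of_subset_of_nonneg (Finset.subset_univ _)
      (fun S _ _ => Complex.normSq_nonneg _)
  linarith

end Aux4
section TwistW
variable {Λ : Type*} [Fintype Λ] [LinearOrder Λ]

/-- A general diagonal phase built from one-body phases `c x` on up-spins. -/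
def phaseW (c : Λ → ℂ) (S : Finset (Λ × Spin)) : ℂ :=
  Complex.exp (∑ m ∈ S.filter (fun m => m.2 = true), c m.1)

lemma conj_phaseW_mul_self (c : Λ → ℂ) (hc : ∀ x, conj (c x) = - c x)
    (S : Finset (Λ × Spin)) : conj (phaseW c S) * phaseW c S = 1 := by
  rw [phaseW, ← Complex.exp_conj, ← Complex.exp_add, map_sum]
  have : ∑ m ∈ S.filter (fun m => m.2 = true), conj (c m.1) =
      -∑ m ∈ S.filter (fun m => m.2 = true), c m.1 := by
    rw [← Finset.sum_neg_distrib]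
    exact Finset.sum_congr rfl fun m _ => hc m.1
  rw [this, neg_add_cancel, Complex.exp_zero]

lemma phaseW_insert_erase (c : Λ → ℂ) (x y : Λ) (σ : Spin) (S : Finset (Λ × Spin))
    (hi : (x, σ) ∈ S) (hj : (y, σ) ∉ S.erase (x, σ)) :
    phaseW c (insert (y, σ) (S.erase (x, σ))) =
      (if σ then Complex.exp (c y - c x) else 1) * phaseW c S := by
  have hfe : (S.erase (x, σ)).filter (fun m => m.2 = true) =
      (S.filter (fun m => m.2 = true)).erase (x, σ) := Finset.filter_erase _ _ _
  cases σ with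
  | false =>
    have h1 : (insert (y, false) (S.erase (x, false))).filter
        (fun m => m.2 = true) = S.filter (fun m => m.2 = true) := by
      rw [Finset.filter_insert, if_neg (by simp), hfe,
        Finset.erase_eq_of_notMem (by simp [Finset.mem_filter])]
    rw [if_neg (by simp), one_mul, phaseW, phaseW, h1]
  | true =>
    have hxf : (x, true) ∈ S.filter (fun m => m.2 = true) := by
      simp [Finset.mem_filter, hi]
    have hyf : (y, true) ∉ (S.filter (fun m => m.2 = true)).erase (x, true) := by
      intro hcmem
      exact hj (Finset.erase_subset_erase _ (Finset.filter_subset _ _) hcmem)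
    have h1 : (insert (y, true) (S.erase (x, true))).filter (fun m => m.2 = true) =
        insert (y, true) ((S.filter (fun m => m.2 = true)).erase (x, true)) := by
      rw [Finset.filter_insert, if_pos rfl, hfe]
    have h2 : ∑ m ∈ (insert (y, true) (S.erase (x, true))).filter
        (fun m => m.2 = true), c m.1 =
        c y + ((∑ m ∈ S.filter (fun m => m.2 = true), c m.1) - c x) := by
      rw [h1, Finset.sum_insert hyf, Finset.sum_erase_eq_sub hxf]
    rw [phaseW, phaseW, h2, if_pos rfl, ← Complex.exp_add]
    congr 1
    ring

lemma twisted_fdot_hop (u : Finset (Λ × Spin) → ℂ)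
    (hu1 : ∀ S, conj (u S) * u S = 1) (i j : Λ × Spin) (w : ℂ)
    (hu2 : ∀ S, i ∈ S → j ∉ S.erase i → u (insert j (S.erase i)) = w * u S)
    (Φ : FockSpace Λ) :
    fdot (fun S => u S * Φ S) ((cdag i ∘ₗ cop j) fun S => u S * Φ S) =
      w * fdot Φ ((cdag i ∘ₗ cop j) Φ) := by
  rw [fdot, fdot, Finset.mul_sum]
  refine Finset.sum_congr rfl fun S _ => ?_
  rw [hop_apply, hop_apply]
  split
  · next hc =>
    have h1 : conj (u S * Φ S) *
        (sgn i (S.erase i) * sgn j (S.erase i) *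
          (u (insert j (S.erase i)) * Φ (insert j (S.erase i)))) =
        (conj (u S) * u S) *
          (w * (conj (Φ S) *
            (sgn i (S.erase i) * sgn j (S.erase i) * Φ (insert j (S.erase i))))) := by
      rw [hu2 S hc.1 hc.2, map_mul]
      ring
    rw [h1, hu1, one_mul]
  · simp

lemma twisted_fdot_Hint (u : Finset (Λ × Spin) → ℂ)
    (hu1 : ∀ S, conj (u S) * u S = 1) (U' : Λ → ℝ) (Φ : FockSpace Λ) :
    fdot (fun S => u S * Φ S) (Hint U' fun S => u S * Φ S) = fdot Φ (Hint U' Φ) := by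
  rw [fdot, fdot]
  refine Finset.sum_congr rfl fun S _ => ?_
  rw [Hint_apply, Hint_apply]
  have h1 : conj (u S * Φ S) *
      ((∑ x, if (x, true) ∈ S ∧ (x, false) ∈ S then ((U' x : ℝ) : ℂ) else 0) * (u S * Φ S)) =
      (conj (u S) * u S) * (conj (Φ S) *
        ((∑ x, if (x, true) ∈ S ∧ (x, false) ∈ S then ((U' x : ℝ) : ℂ) else 0) * Φ S)) := by
    rw [map_mul]; ring
  rw [h1, hu1, one_mul]

lemma twisted_fdot_self (u : Finset (Λ × Spin) → ℂ)
    (hu1 : ∀ S, conj (u S) * u S = 1) (Φ : FockSpace Λ) :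
    fdot (fun S => u S * Φ S) (fun S => u S * Φ S) = fdot Φ Φ := by
  rw [fdot, fdot]
  refine Finset.sum_congr rfl fun S _ => ?_
  have h1 : conj (u S * Φ S) * (u S * Φ S) = (conj (u S) * u S) * (conj (Φ S) * Φ S) := by
    rw [map_mul]; ring
  rw [h1, hu1, one_mul]

end TwistW
section FinArith

/-- The canonical ring representative `d(x,y) ∈ [-R, N-1-R]` of `y - x` mod `N`. -/
def drep (N R : ℕ) (x y : Fin N) : ℤ :=
  (((y.val : ℤ) - (x.val : ℤ) + (R : ℤ)) % (N : ℤ)) - (R : ℤ)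

lemma drep_modeq (N R : ℕ) (hN : 0 < N) (x y : Fin N) :
    ∃ k : ℤ, (y.val : ℤ) - (x.val : ℤ) = drep N R x y + (N : ℤ) * k := by
  refine ⟨((y.val : ℤ) - (x.val : ℤ) + (R : ℤ)) / (N : ℤ), ?_⟩
  have := Int.emod_add_mul_ediv ((y.val : ℤ) - (x.val : ℤ) + (R : ℤ)) (N : ℤ)
  rw [drep]
  linarith

lemma dist_cases (a b : ℕ) :
    ((Nat.dist a b : ℤ) = (a : ℤ) - b ∧ (b : ℤ) ≤ a) ∨
    ((Nat.dist a b : ℤ) = (b : ℤ) - a ∧ (a : ℤ) ≤ b) := by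
  rcases le_total a b with h | h
  · right
    rw [Nat.dist_eq_sub_of_le h]
    constructor
    · push_cast [h]; ring
    · exact_mod_cast h
  · left
    rw [Nat.dist_eq_sub_of_le_right h]
    constructor
    · push_cast [h]; ring
    · exact_mod_cast h

lemma emod_cases (c n : ℤ) (hn : 0 < n) (hlb : -n < c) (hub : c < 2 * n) :
    (0 ≤ c ∧ c < n ∧ c % n = c) ∨ (c < 0 ∧ c % n = c + n) ∨ (n ≤ c ∧ c % n = c - n) := by
  rcases lt_or_ge c 0 with hc | hc
  · right; left
    refine ⟨hc, ?_⟩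
    have h1 : (c + n) % n = c % n := by
      simpa using Int.add_mul_emod_self_left (a := c) (b := n) (c := 1)
    rw [← h1, Int.emod_eq_of_lt (by omega) (by omega)]
  · rcases lt_or_ge c n with hc2 | hc2
    · exact Or.inl ⟨hc, hc2, Int.emod_eq_of_lt hc hc2⟩
    · right; right
      refine ⟨hc2, ?_⟩
      have h1 : (c - n) % n = c % n := by
        simpa using Int.add_mul_emod_self_left (a := c - n) (b := n) (c := 1)
      rw [← h1, Int.emod_eq_of_lt (by omega) (by omega)]

lemma drep_bound (N R : ℕ) (h2R : 2 * R < N) (x y : Fin N)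
    (hmin : min (Nat.dist x.val y.val) (N - Nat.dist x.val y.val) ≤ R) :
    |drep N R x y| ≤ (R : ℤ) := by
  have hN : (0:ℤ) < N := by exact_mod_cast (by omega : 0 < N)
  have hx : (x.val : ℤ) < N := by exact_mod_cast x.isLt
  have hy : (y.val : ℤ) < N := by exact_mod_cast y.isLt
  have hx0 : (0:ℤ) ≤ (x.val : ℤ) := Int.ofNat_nonneg _
  have hy0 : (0:ℤ) ≤ (y.val : ℤ) := Int.ofNat_nonneg _
  have h2R' : 2 * (R:ℤ) < N := by exact_mod_cast h2R
  have hdist := dist_cases x.val y.val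
  have hd_le : (Nat.dist x.val y.val : ℤ) ≤ N := by
    rcases hdist with ⟨h1, _⟩ | ⟨h1, _⟩ <;> omega
  have hmin' : (Nat.dist x.val y.val : ℤ) ≤ R ∨ (N : ℤ) ≤ R + Nat.dist x.val y.val := by
    rcases min_le_iff.mp hmin with h | h
    · left; exact_mod_cast h
    · right
      have hd_le' : Nat.dist x.val y.val ≤ N := by exact_mod_cast hd_le
      have h4 : N ≤ R + Nat.dist x.val y.val := by omega
      exact_mod_cast h4
  have hc := emod_cases ((y.val:ℤ) - x.val + R) N hN (by omega) (by omega)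
  rw [drep, abs_le]
  rcases hc with ⟨hr1, hr2, h⟩ | ⟨hr1, h⟩ | ⟨hr1, h⟩ <;> rw [h] <;>
    rcases hdist with ⟨h1, h2⟩ | ⟨h1, h2⟩ <;>
    rcases hmin' with h3 | h3 <;> constructor <;> omega

lemma drep_inj (N R : ℕ) (x : Fin N) {y₁ y₂ : Fin N}
    (h : drep N R x y₁ = drep N R x y₂) : y₁ = y₂ := by
  have hmod : ((y₁.val : ℤ) - x.val + R) % N = ((y₂.val : ℤ) - x.val + R) % N := by
    rw [drep, drep] at h
    omega
  have hdvd : (N : ℤ) ∣ (((y₂.val : ℤ) - x.val + R) - ((y₁.val : ℤ) - x.val + R)) :=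
    Int.ModEq.dvd hmod
  have hy1 : (y₁.val : ℤ) < N := by exact_mod_cast y₁.isLt
  have hy2 : (y₂.val : ℤ) < N := by exact_mod_cast y₂.isLt
  have h0 : ((y₂.val : ℤ) - y₁.val) = 0 := by
    refine Int.eq_zero_of_abs_lt_dvd (by simpa using hdvd) ?_
    rw [abs_lt]
    constructor
    · have := Int.ofNat_nonneg y₂.val; omega
    · have := Int.ofNat_nonneg y₁.val; omega
  have : y₁.val = y₂.val := by omega
  exact Fin.ext this

lemma count_bound (N R : ℕ) (x : Fin N) :
    (Finset.univ.filter (fun y : Fin N => |drep N R x y| ≤ (R : ℤ))).card ≤ 2 * R + 1 := by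
  have h1 : (Finset.univ.filter (fun y : Fin N => |drep N R x y| ≤ (R : ℤ))).card ≤
      (Finset.Icc (-(R : ℤ)) (R : ℤ)).card := by
    refine Finset.card_le_card_of_injOn (drep N R x) ?_ ?_
    · intro y hy
      rw [Finset.mem_coe, Finset.mem_filter] at hy
      rw [Finset.mem_coe, Finset.mem_Icc, ← abs_le]
      exact hy.2
    · intro y₁ _ y₂ _ h
      exact drep_inj N R x h
  rw [Int.card_Icc] at h1
  omega

end FinArith
section PhaseBound

lemma expI_sub_one_le (θ : ℝ) : ‖Complex.exp (θ * Complex.I) - 1‖ ≤ |θ| := by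
  rw [← pow_le_pow_iff_left₀ (norm_nonneg _) (abs_nonneg θ) two_ne_zero]
  rw [Complex.sq_norm, Complex.normSq_apply]
  simp only [Complex.sub_re, Complex.sub_im, Complex.exp_ofReal_mul_I_re,
    Complex.exp_ofReal_mul_I_im, Complex.one_re, Complex.one_im]
  have h1 : Real.cos θ = 1 - 2 * Real.sin (θ / 2) ^ 2 := by
    have := Real.sin_sq_eq_half_sub (θ / 2)
    rw [show 2 * (θ / 2) = θ by ring] at this
    nlinarith
  have h2 : Real.sin (θ / 2) ^ 2 ≤ (θ / 2) ^ 2 := Real.sin_sq_le_sq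
  nlinarith [Real.sin_sq_add_cos_sq θ, _root_.sq_abs θ]

lemma cos_sum_bound (θ : ℝ) :
    ‖Complex.exp (θ * Complex.I) + conj (Complex.exp (θ * Complex.I)) - 2‖
      ≤ θ ^ 2 := by
  have hconj : conj (Complex.exp ((θ : ℂ) * Complex.I)) =
      Complex.exp (((-θ : ℝ) : ℂ) * Complex.I) := by
    rw [← Complex.exp_conj, map_mul, Complex.conj_I, Complex.conj_ofReal]
    push_cast
    ring_nf
  have hmul : Complex.exp ((θ : ℂ) * Complex.I) * Complex.exp (((-θ : ℝ) : ℂ) * Complex.I)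
      = 1 := by
    rw [← Complex.exp_add]
    push_cast
    ring_nf
    exact Complex.exp_zero
  have hfact : Complex.exp ((θ : ℂ) * Complex.I) + conj (Complex.exp ((θ : ℂ) * Complex.I)) - 2
      = -((Complex.exp ((θ : ℂ) * Complex.I) - 1) *
          (Complex.exp (((-θ : ℝ) : ℂ) * Complex.I) - 1)) := by
    rw [hconj]
    linear_combination hmul
  rw [hfact, norm_neg, norm_mul]
  have b1 := expI_sub_one_le θ
  have b2 := expI_sub_one_le (-θ)
  calc ‖Complex.exp ((θ : ℂ) * Complex.I) - 1‖ *
        ‖Complex.exp (((-θ : ℝ) : ℂ) * Complex.I) - 1‖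
      ≤ |θ| * |(-θ)| := by
        exact mul_le_mul b1 b2 (norm_nonneg _) (abs_nonneg _)
    _ = θ ^ 2 := by rw [abs_neg, ← _root_.sq_abs]; ring

lemma exp_drep_eq (N R : ℕ) (hN : 0 < N) (x y : Fin N) :
    Complex.exp (2 * Real.pi * Complex.I * ((y.val : ℂ) - (x.val : ℂ)) / N) =
      Complex.exp (((2 * Real.pi * ((drep N R x y : ℤ) : ℝ) / N : ℝ) : ℂ) * Complex.I) := by
  obtain ⟨k, hk⟩ := drep_modeq N R hN x y
  have hNC : ((N : ℂ)) ≠ 0 := Nat.cast_ne_zero.mpr hN.ne'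
  have hkC : (y.val : ℂ) - (x.val : ℂ) = ((drep N R x y : ℤ) : ℂ) + (N : ℂ) * (k : ℂ) := by
    exact_mod_cast hk
  have harg : 2 * Real.pi * Complex.I * ((y.val : ℂ) - (x.val : ℂ)) / N =
      ((2 * Real.pi * ((drep N R x y : ℤ) : ℝ) / N : ℝ) : ℂ) * Complex.I +
        (k : ℂ) * (2 * (Real.pi : ℂ) * Complex.I) := by
    rw [hkC]
    push_cast
    field_simp
  rw [harg, Complex.exp_add, Complex.exp_int_mul_two_pi_mul_I, mul_one]

lemma drep_theta_sq (N R : ℕ) (hN : 0 < N) (x y : Fin N) (hd : |drep N R x y| ≤ (R : ℤ)) :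
    (2 * Real.pi * ((drep N R x y : ℤ) : ℝ) / N) ^ 2 ≤ (2 * Real.pi * R / N) ^ 2 := by
  have hdr : |((drep N R x y : ℤ) : ℝ)| ≤ (R : ℝ) := by
    rw [← Int.cast_abs]
    exact_mod_cast hd
  have hd2 : ((drep N R x y : ℤ) : ℝ) ^ 2 ≤ (R : ℝ) ^ 2 := by
    nlinarith [abs_nonneg ((drep N R x y : ℤ) : ℝ), le_abs_self ((drep N R x y : ℤ) : ℝ),
      neg_abs_le ((drep N R x y : ℤ) : ℝ)]
  have hNpos : (0 : ℝ) < N := by exact_mod_cast hN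
  have h1 : (0 : ℝ) ≤ (2 * Real.pi / N) ^ 2 := sq_nonneg _
  calc (2 * Real.pi * ((drep N R x y : ℤ) : ℝ) / N) ^ 2
      = (2 * Real.pi / N) ^ 2 * ((drep N R x y : ℤ) : ℝ) ^ 2 := by ring
    _ ≤ (2 * Real.pi / N) ^ 2 * (R : ℝ) ^ 2 := by nlinarith
    _ = (2 * Real.pi * R / N) ^ 2 := by ring

end PhaseBound
section Variational

open scoped InnerProductSpace

lemma fdot_add_right {Λ : Type*} [Fintype Λ] [LinearOrder Λ] (ψ φ₁ φ₂ : FockSpace Λ) :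
    fdot ψ (φ₁ + φ₂) = fdot ψ φ₁ + fdot ψ φ₂ := by
  simp only [fdot, Pi.add_apply, mul_add, Finset.sum_add_distrib]

lemma variational {E : Type*} [NormedAddCommGroup E] [InnerProductSpace ℂ E]
    [FiniteDimensional ℂ E]
    (T : E →ₗ[ℂ] E) (hT : T.IsSymmetric) (V : Submodule ℂ E)
    (hV : ∀ v ∈ V, T v ∈ V) (Egs : ℝ)
    (hE : ∀ (μ : ℝ) (v : E), v ∈ V → v ≠ 0 → T v = (μ : ℂ) • v → Egs ≤ μ)
    (ψ : E) (hψV : ψ ∈ V) (hψ : (⟪ψ, ψ⟫_ℂ) = 1) :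
    Egs ≤ (⟪ψ, T ψ⟫_ℂ).re := by
  classical
  let T' : V →ₗ[ℂ] V := T.restrict hV
  have hT' : T'.IsSymmetric := fun x y => hT x y
  let n := Module.finrank ℂ V
  have hn : Module.finrank ℂ V = n := rfl
  let b := hT'.eigenvectorBasis hn
  let μ := hT'.eigenvalues hn
  have hb : ∀ i, T' (b i) = (μ i : ℂ) • b i := fun i => hT'.apply_eigenvectorBasis hn i
  have hμ : ∀ i, Egs ≤ μ i := by
    intro i
    refine hE (μ i) (b i) (b i).2 ?_ ?_
    · have : (b i) ≠ 0 := b.toBasis.ne_zero i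
      simpa [Submodule.coe_eq_zero] using this
    · have : (T' (b i) : E) = T (b i) := rfl
      rw [← this, hb i]; rfl
  let ψV : V := ⟨ψ, hψV⟩
  set c : EuclideanSpace ℂ (Fin n) := b.repr ψV with hc
  have hrepr : ∀ i, b.repr (T' ψV) i = (μ i : ℂ) * c i := by
    intro i
    rw [OrthonormalBasis.repr_apply_apply, ← hT' (b i) ψV, hb i, inner_smul_left]
    simp [OrthonormalBasis.repr_apply_apply, hc, Complex.conj_ofReal]
  have hinner : ⟪ψ, T ψ⟫_ℂ = ∑ i, conj (c i) * ((μ i : ℂ) * c i) := by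
    have h1 : ⟪ψ, T ψ⟫_ℂ = ⟪ψV, T' ψV⟫_ℂ := rfl
    rw [h1, ← b.repr.inner_map_map ψV (T' ψV)]
    rw [PiLp.inner_apply]
    congr 1; funext i
    rw [hrepr i, RCLike.inner_apply']
  have hnorm : ∑ i, Complex.normSq (c i) = 1 := by
    have h1 : ⟪ψ, ψ⟫_ℂ = ∑ i, conj (c i) * c i := by
      have : ⟪ψ, ψ⟫_ℂ = ⟪ψV, ψV⟫_ℂ := rfl
      rw [this, ← b.repr.inner_map_map ψV ψV, PiLp.inner_apply]; simp only [RCLike.inner_apply']; rfl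
    have := h1 ▸ hψ
    have h2 : ((∑ i, Complex.normSq (c i) : ℝ) : ℂ) = 1 := by
      push_cast
      rw [← this]
      congr 1; funext i
      rw [Complex.normSq_eq_conj_mul_self]
    exact_mod_cast h2
  have hre : (⟪ψ, T ψ⟫_ℂ).re = ∑ i, μ i * Complex.normSq (c i) := by
    rw [hinner, Complex.re_sum]
    congr 1; funext i
    have : conj (c i) * ((μ i : ℂ) * c i) = (μ i : ℂ) * (conj (c i) * c i) := by ring
    rw [this, ← Complex.normSq_eq_conj_mul_self]
    simp [Complex.ofReal_mul]
  rw [hre]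
  calc Egs = ∑ i, Egs * Complex.normSq (c i) := by rw [← Finset.mul_sum, hnorm, mul_one]
    _ ≤ ∑ i, μ i * Complex.normSq (c i) :=
        Finset.sum_le_sum fun i _ => mul_le_mul_of_nonneg_right (hμ i) (Complex.normSq_nonneg _)

lemma ground_bound {Λ : Type*} [Fintype Λ] [LinearOrder Λ] (t : Λ → Λ → ℝ) (U : Λ → ℝ)
    (Ne : ℕ) (Egs : ℝ) (hts : ∀ x y, t x y = t y x)
    (hgs : ∀ E' ∈ energies (Ham t U) Ne, Egs ≤ E')
    (ψ : FockSpace Λ) (hψsupp : ∀ S : Finset (Λ × Spin), S.card ≠ Ne → ψ S = 0)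
    (hψnorm : fdot ψ ψ = 1) : Egs ≤ (fdot ψ (Ham t U ψ)).re := by
  classical
  set e := WithLp.linearEquiv 2 ℂ (Finset (Λ × Spin) → ℂ) with he
  set T : EuclideanSpace ℂ (Finset (Λ × Spin)) →ₗ[ℂ] EuclideanSpace ℂ (Finset (Λ × Spin)) :=
    e.symm.toLinearMap ∘ₗ (Ham t U) ∘ₗ e.toLinearMap with hTdef
  have hTapp : ∀ v, e (T v) = Ham t U (e v) := by
    intro v
    rw [hTdef]
    simp
  have hinner : ∀ v w : EuclideanSpace ℂ (Finset (Λ × Spin)),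
      (⟪v, w⟫_ℂ) = fdot (e v) (e w) := by
    intro v w
    rw [fdot, PiLp.inner_apply]
    simp only [RCLike.inner_apply']
    rfl
  have hT : T.IsSymmetric := by
    intro v w
    rw [hinner, hinner, hTapp, hTapp, fdot_Ham_symm t U hts]
  let W : Submodule ℂ (FockSpace Λ) :=
    { carrier := {φ | ∀ S : Finset (Λ × Spin), S.card ≠ Ne → φ S = 0}
      add_mem' := by
        intro φ₁ φ₂ h1 h2 S hS
        simp only [Pi.add_apply, h1 S hS, h2 S hS, add_zero]
      zero_mem' := fun S _ => rfl
      smul_mem' := by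
        intro a φ hφ S hS
        simp only [Pi.smul_apply, hφ S hS, smul_zero] }
  have hWmem : ∀ φ : FockSpace Λ, φ ∈ W ↔ ∀ S : Finset (Λ × Spin), S.card ≠ Ne → φ S = 0 :=
    fun φ => Iff.rfl
  let V : Submodule ℂ (EuclideanSpace ℂ (Finset (Λ × Spin))) := W.comap e.toLinearMap
  have hVmem : ∀ v, v ∈ V ↔ (e v) ∈ W := fun v => Iff.rfl
  have hV : ∀ v ∈ V, T v ∈ V := by
    intro v hv
    rw [hVmem, hWmem] at hv ⊢
    rw [hTapp]
    exact Ham_support t U Ne (e v) hv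
  have hE : ∀ (μ : ℝ) (v : EuclideanSpace ℂ (Finset (Λ × Spin))),
      v ∈ V → v ≠ 0 → T v = (μ : ℂ) • v → Egs ≤ μ := by
    intro μ v hvV hv0 heig
    refine hgs μ ?_
    have h1 : Ham t U (e v) = (μ : ℂ) • (e v) := by
      rw [← hTapp, heig, map_smul]
    have h2 : Nhat (e v) = ((Ne : ℝ) : ℂ) • (e v) :=
      (Nhat_eigen_iff (e v) Ne).mpr hvV
    have h3 : e v ≠ 0 := fun hc => hv0 (by simpa using congrArg e.symm hc)
    show sector (Ham t U) Ne μ ≠ ⊥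
    rw [Submodule.ne_bot_iff]
    refine ⟨e v, ?_, h3⟩
    rw [sector, Submodule.mem_inf]
    constructor
    · rw [eigR, Module.End.mem_eigenspace_iff]
      exact h1
    · rw [eigR, Module.End.mem_eigenspace_iff]
      exact h2
  have hmem : e.symm ψ ∈ V := by
    rw [hVmem, hWmem]
    simpa using hψsupp
  have hone : (⟪e.symm ψ, e.symm ψ⟫_ℂ) = 1 := by
    rw [hinner]
    simpa using hψnorm
  have hmain := variational T hT V hV Egs hE (e.symm ψ) hmem hone
  rw [hinner, hTapp] at hmain
  simpa using hmain

end Variational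

/-- **Twist-operator energy estimate** (the finite-volume step of the
Yamanaka–Oshikawa–Affleck theorem).  On the periodic chain of length `N`, with
hoppings of range `R` (with respect to the distance on the ring) bounded by `t̄`,
for any normalized ground state `Φ_GS` of `H` in the `N_e`-electron sector with
ground energy `E_GS`, the twisted state `Ψ = U_tw Φ_GS` satisfies
`⟨Ψ, HΨ⟩ − E_GS ≤ C/N`, where `C` depends only on `R`, `t̄` and the density
`ν ≥ N_e/N`, not otherwise on `N`. -/
theorem twist_energy_estimate (R : ℕ) (tbar ν : ℝ) :
    ∃ C : ℝ, ∀ (N : ℕ) (t : Fin N → Fin N → ℝ) (U : Fin N → ℝ) (Ne : ℕ)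
      (Φ : FockSpace (Fin N)) (Egs : ℝ),
      0 < N → 2 * R < N →
      (∀ x y, t x y = t y x) →
      (∀ x y : Fin N,
          R < min (Nat.dist x.val y.val) (N - Nat.dist x.val y.val) → t x y = 0) →
      (∀ x y, |t x y| ≤ tbar) →
      (Ne : ℝ) ≤ ν * N →
      fdot Φ Φ = 1 →
      Nhat Φ = ((Ne : ℝ) : ℂ) • Φ →
      Ham t U Φ = ((Egs : ℝ) : ℂ) • Φ →
      (∀ E' ∈ energies (Ham t U) Ne, Egs ≤ E') →
      (fdot (Utw N Φ) (Ham t U (Utw N Φ))).re - Egs ≤ C / N := by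
  classical
  refine ⟨(2 * R + 1) * tbar * (2 * Real.pi * R) ^ 2, ?_⟩
  intro N t U Ne Φ Egs hN h2R hts htR htb hν hnorm hNhat hHam hgs
  have hNR : (0 : ℝ) < N := by exact_mod_cast hN
  have htbar0 : 0 ≤ tbar := le_trans (abs_nonneg _) (htb ⟨0, hN⟩ ⟨0, hN⟩)
  -- one-body phases
  set c : Fin N → ℂ := fun z => 2 * Real.pi * Complex.I * ((z.val : ℂ) + 1) / N with hcdef
  have hcconj : ∀ z, conj (c z) = - c z := by
    intro z
    rw [hcdef]
    simp only [map_div₀, map_mul, map_add, map_one, Complex.conj_I, Complex.conj_ofReal,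
      Complex.conj_natCast, map_ofNat]
    ring
  set ph : Finset (Fin N × Spin) → ℂ := phaseW c with hphdef
  have hu1 : ∀ S, conj (ph S) * ph S = 1 := conj_phaseW_mul_self c hcconj
  set ph' : Finset (Fin N × Spin) → ℂ := fun S => conj (ph S) with hph'def
  have hu1' : ∀ S, conj (ph' S) * ph' S = 1 := by
    intro S
    rw [hph'def]
    simp only [Complex.conj_conj]
    rw [mul_comm]
    exact hu1 S
  set Ψ : FockSpace (Fin N) := fun S => ph S * Φ S with hΨdef
  set Φ' : FockSpace (Fin N) := fun S => ph' S * Φ S with hΦ'def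
  have hUtwΦ : Utw N Φ = Ψ := by
    funext S
    show Complex.exp (2 * Real.pi * Complex.I *
        (∑ m ∈ S.filter (fun m => m.2 = true), ((m.1.val : ℂ) + 1)) / N) * Φ S =
      Complex.exp (∑ m ∈ S.filter (fun m => m.2 = true), c m.1) * Φ S
    congr 2
    rw [hcdef, Finset.mul_sum, Finset.sum_div]
  set F : Fin N → Fin N → Spin → ℂ :=
    fun x y σ => fdot Φ ((cdag (x, σ) ∘ₗ cop (y, σ)) Φ) with hFdef
  set w : Fin N → Fin N → Spin → ℂ :=
    fun x y σ => if σ then Complex.exp (c y - c x) else 1 with hwdef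
  have hhopΨ : ∀ x y σ, fdot Ψ ((cdag (x, σ) ∘ₗ cop (y, σ)) Ψ) = w x y σ * F x y σ :=
    fun x y σ => twisted_fdot_hop ph hu1 (x, σ) (y, σ) (w x y σ)
      (fun S hi hj => phaseW_insert_erase c x y σ S hi hj) Φ
  have hhopΦ' : ∀ x y σ, fdot Φ' ((cdag (x, σ) ∘ₗ cop (y, σ)) Φ') =
      conj (w x y σ) * F x y σ := by
    intro x y σ
    refine twisted_fdot_hop ph' hu1' (x, σ) (y, σ) (conj (w x y σ)) ?_ Φ
    intro S hi hj
    rw [hph'def]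
    have := congrArg conj (phaseW_insert_erase c x y σ S hi hj)
    rw [map_mul] at this
    exact this
  have hintΨ : fdot Ψ (Hint U Ψ) = fdot Φ (Hint U Φ) := twisted_fdot_Hint ph hu1 U Φ
  have hintΦ' : fdot Φ' (Hint U Φ') = fdot Φ (Hint U Φ) := twisted_fdot_Hint ph' hu1' U Φ
  have hnormΦ' : fdot Φ' Φ' = 1 := (twisted_fdot_self ph' hu1' Φ).trans hnorm
  have hsupp : ∀ S : Finset (Fin N × Spin), S.card ≠ Ne → Φ S = 0 :=
    (Nhat_eigen_iff Φ Ne).mp hNhat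
  have hsupp' : ∀ S : Finset (Fin N × Spin), S.card ≠ Ne → Φ' S = 0 := by
    intro S hS
    show ph' S * Φ S = 0
    rw [hsupp S hS, mul_zero]
  have hvar : Egs ≤ (fdot Φ' (Ham t U Φ')).re :=
    ground_bound t U Ne Egs hts hgs Φ' hsupp' hnormΦ'
  have hfH : fdot Φ (Ham t U Φ) = ((Egs : ℝ) : ℂ) := by
    rw [hHam, fdot_smul_right, hnorm, mul_one]
  have hsplit : ∀ ψ : FockSpace (Fin N),
      fdot ψ (Ham t U ψ) = fdot ψ (Hhop t ψ) + fdot ψ (Hint U ψ) := by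
    intro ψ
    rw [Ham, LinearMap.add_apply, fdot_add_right]
  have hexpΨ : fdot Ψ (Hhop t Ψ) =
      ∑ x, ∑ y, ∑ σ, (t x y : ℂ) * (w x y σ * F x y σ) := by
    rw [fdot_Hhop]
    exact Finset.sum_congr rfl fun x _ => Finset.sum_congr rfl fun y _ =>
      Finset.sum_congr rfl fun σ _ => by rw [hhopΨ]
  have hexpΦ' : fdot Φ' (Hhop t Φ') =
      ∑ x, ∑ y, ∑ σ, (t x y : ℂ) * (conj (w x y σ) * F x y σ) := by
    rw [fdot_Hhop]
    exact Finset.sum_congr rfl fun x _ => Finset.sum_congr rfl fun y _ =>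
      Finset.sum_congr rfl fun σ _ => by rw [hhopΦ']
  have hexpΦ : fdot Φ (Hhop t Φ) = ∑ x, ∑ y, ∑ σ, (t x y : ℂ) * F x y σ := by
    rw [fdot_Hhop]
  have hcomb : fdot Ψ (Ham t U Ψ) + fdot Φ' (Ham t U Φ') - 2 * fdot Φ (Ham t U Φ) =
      ∑ x, ∑ y, (t x y : ℂ) * ((w x y true + conj (w x y true) - 2) * F x y true) := by
    rw [hsplit Ψ, hsplit Φ', hsplit Φ, hexpΨ, hexpΦ', hexpΦ, hintΨ, hintΦ']
    have hkey : ∀ x y : Fin N,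
        (∑ σ, (t x y : ℂ) * (w x y σ * F x y σ)) +
          (∑ σ, (t x y : ℂ) * (conj (w x y σ) * F x y σ)) -
          2 * (∑ σ, (t x y : ℂ) * F x y σ) =
        (t x y : ℂ) * ((w x y true + conj (w x y true) - 2) * F x y true) := by
      intro x y
      rw [Fintype.sum_bool, Fintype.sum_bool, Fintype.sum_bool]
      have hwf : w x y false = 1 := by simp [hwdef]
      rw [hwf, map_one]
      ring
    calc (∑ x, ∑ y, ∑ σ, (t x y : ℂ) * (w x y σ * F x y σ)) + fdot Φ (Hint U Φ) +
          ((∑ x, ∑ y, ∑ σ, (t x y : ℂ) * (conj (w x y σ) * F x y σ)) + fdot Φ (Hint U Φ)) -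
          2 * ((∑ x, ∑ y, ∑ σ, (t x y : ℂ) * F x y σ) + fdot Φ (Hint U Φ)) =
        (∑ x, ∑ y, ((∑ σ, (t x y : ℂ) * (w x y σ * F x y σ)) +
          (∑ σ, (t x y : ℂ) * (conj (w x y σ) * F x y σ)) -
          2 * (∑ σ, (t x y : ℂ) * F x y σ))) := by
          simp only [Finset.sum_sub_distrib, Finset.sum_add_distrib, Finset.mul_sum, mul_add]
          ring
      _ = ∑ x, ∑ y, (t x y : ℂ) * ((w x y true + conj (w x y true) - 2) * F x y true) :=
          Finset.sum_congr rfl fun x _ => Finset.sum_congr rfl fun y _ => hkey x y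
  -- the per-term bound
  set val : ℝ := tbar * (2 * Real.pi * R / N) ^ 2 with hvaldef
  have hval0 : 0 ≤ val := by
    rw [hvaldef]
    positivity
  have hterm : ∀ x y : Fin N,
      ‖(t x y : ℂ) * ((w x y true + conj (w x y true) - 2) * F x y true)‖ ≤
        (if |drep N R x y| ≤ (R : ℤ) then val else 0) := by
    intro x y
    by_cases hcase : R < min (Nat.dist x.val y.val) (N - Nat.dist x.val y.val)
    · rw [htR x y hcase]
      simp only [Complex.ofReal_zero, zero_mul, norm_zero]
      split
      · exact hval0
      · exact le_rfl
    · have hd : |drep N R x y| ≤ (R : ℤ) := drep_bound N R h2R x y (le_of_not_gt hcase)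
      rw [if_pos hd]
      have hwt : w x y true = Complex.exp
          (((2 * Real.pi * ((drep N R x y : ℤ) : ℝ) / N : ℝ) : ℂ) * Complex.I) := by
        rw [hwdef]
        show Complex.exp (c y - c x) = _
        have hcc : c y - c x = 2 * Real.pi * Complex.I * ((y.val : ℂ) - (x.val : ℂ)) / N := by
          rw [hcdef]
          ring
        rw [hcc, exp_drep_eq N R hN x y]
      have hw2 : ‖w x y true + conj (w x y true) - 2‖ ≤
          (2 * Real.pi * R / N) ^ 2 := by
        rw [hwt]
        refine le_trans (cos_sum_bound _) ?_
        exact drep_theta_sq N R hN x y hd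
      have hF1 : ‖F x y true‖ ≤ 1 := hop_bound _ _ Φ hnorm
      rw [norm_mul, norm_mul]
      have habs_t : ‖(t x y : ℂ)‖ = |t x y| := (Complex.norm_real _).trans (Real.norm_eq_abs _)
      rw [habs_t, hvaldef]
      calc |t x y| * (‖w x y true + conj (w x y true) - 2‖ *
            ‖F x y true‖) ≤
          tbar * ((2 * Real.pi * R / N) ^ 2 * 1) := by
            refine mul_le_mul (htb x y) ?_ (by positivity) htbar0
            exact mul_le_mul hw2 hF1 (norm_nonneg _) (by positivity)
        _ = tbar * (2 * Real.pi * R / N) ^ 2 := by ring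
  -- summing the bound
  have hsumy : ∀ x : Fin N,
      ∑ y, (if |drep N R x y| ≤ (R : ℤ) then val else 0) ≤ (2 * R + 1 : ℝ) * val := by
    intro x
    rw [Finset.sum_ite, Finset.sum_const_zero, add_zero, Finset.sum_const, nsmul_eq_mul]
    refine mul_le_mul_of_nonneg_right ?_ hval0
    have := count_bound N R x
    calc ((Finset.univ.filter (fun y : Fin N => |drep N R x y| ≤ (R : ℤ))).card : ℝ) ≤
        ((2 * R + 1 : ℕ) : ℝ) := by exact_mod_cast this
      _ = (2 * R + 1 : ℝ) := by push_cast; ring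
  have habs : ‖∑ x, ∑ y,
      (t x y : ℂ) * ((w x y true + conj (w x y true) - 2) * F x y true)‖ ≤
      (N : ℝ) * ((2 * R + 1 : ℝ) * val) := by
    refine le_trans (norm_sum_le _ _) ?_
    have hx : ∀ x : Fin N, ‖∑ y,
        (t x y : ℂ) * ((w x y true + conj (w x y true) - 2) * F x y true)‖ ≤
        (2 * R + 1 : ℝ) * val := by
      intro x
      refine le_trans (norm_sum_le _ _) (le_trans (Finset.sum_le_sum
        fun y _ => hterm x y) (hsumy x))
    refine le_trans (Finset.sum_le_sum fun x _ => hx x) ?_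
    rw [Finset.sum_const, nsmul_eq_mul, Finset.card_univ, Fintype.card_fin]
  -- put everything together
  rw [hUtwΦ]
  have hsum2 : (fdot Ψ (Ham t U Ψ)).re - Egs ≤
      ((fdot Ψ (Ham t U Ψ)) + (fdot Φ' (Ham t U Φ')) - 2 * fdot Φ (Ham t U Φ)).re := by
    have hre : ((fdot Ψ (Ham t U Ψ)) + (fdot Φ' (Ham t U Φ')) -
        2 * fdot Φ (Ham t U Φ)).re =
        (fdot Ψ (Ham t U Ψ)).re + (fdot Φ' (Ham t U Φ')).re - 2 * Egs := by
      rw [hfH, Complex.sub_re, Complex.add_re]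
      have : ((2 : ℂ) * ((Egs : ℝ) : ℂ)).re = 2 * Egs := by
        rw [show (2 : ℂ) * ((Egs : ℝ) : ℂ) = (((2 * Egs : ℝ)) : ℂ) by push_cast; ring]
        exact Complex.ofReal_re _
      rw [this]
    rw [hre]
    linarith [hvar]
  refine le_trans hsum2 ?_
  rw [hcomb]
  refine le_trans (Complex.re_le_norm _) (le_trans habs ?_)
  rw [hvaldef]
  have hfinal : (N : ℝ) * ((2 * R + 1 : ℝ) * (tbar * (2 * Real.pi * R / N) ^ 2)) =
      (2 * R + 1) * tbar * (2 * Real.pi * R) ^ 2 / N := by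
    field_simp
  rw [hfinal]


end Hubbard
end
end

section
/- Flat band of the kagomé lattice. Let Λ be a finite kagomé lattice with periodic boundary conditions (|Λ| = 3L² sites), and let the hopping matrix be t_{x,y} = t > 0 for all pairs of neighboring sites x, y and t_{x,y} = 0 otherwise. Then the single-electron Schrödinger equation Σ_{y∈Λ} t_{x,y} φ_y = ε φ_x has lowest eigenvalue ε = −2t with multiplicity exactly M = (|Λ|/3) + 1 = L² + 1, and every other eigenvalue is strictly greater than −2t; that is, ε_1 = ε_2 = … = ε_M = −2t and ε_j > −2t for all j > M. -/
/-!  Common framework: the Hubbard model on a finite lattice, formalized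
concretely on the fermionic Fock space realized as `Finset (Λ × Bool) → ℂ`. -/

noncomputable section
namespace Hubbard

open scoped BigOperators

variable (Λ : Type*) [Fintype Λ] [LinearOrder Λ]

variable {Λ}

/-- The kagomé lattice on an `L × L` torus, realized as the line graph of the
honeycomb lattice: sites are the bonds of the honeycomb lattice, labelled by a
hexagonal unit cell `v ∈ (ZMod L)²` and a direction index `i ∈ Fin 3`; the bond
`(v, i)` joins the `A`-vertex `v` to the `B`-vertex `v + dvec i`. -/
def Kag (L : ℕ) : Type := (ZMod L × ZMod L) × Fin 3

instance (L : ℕ) [NeZero L] : Fintype (Kag L) :=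
  inferInstanceAs (Fintype ((ZMod L × ZMod L) × Fin 3))

instance (L : ℕ) : DecidableEq (Kag L) :=
  inferInstanceAs (DecidableEq ((ZMod L × ZMod L) × Fin 3))

/-- The displacement of the `B`-endpoint of the three bonds of a honeycomb unit cell. -/
def dvec (L : ℕ) : Fin 3 → ZMod L × ZMod L := ![(0, 0), (1, 0), (0, 1)]

/-- Two kagomé sites are neighbors iff the corresponding honeycomb bonds are
distinct and share an endpoint. -/
def kagAdj (L : ℕ) (p q : Kag L) : Prop :=
  p ≠ q ∧ (p.1 = q.1 ∨ p.1 + dvec L p.2 = q.1 + dvec L q.2)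

instance (L : ℕ) (p q : Kag L) : Decidable (kagAdj L p q) :=
  inferInstanceAs (Decidable (p ≠ q ∧ (p.1 = q.1 ∨ p.1 + dvec L p.2 = q.1 + dvec L q.2)))

/-- The kagomé hopping matrix: `t_{x,y} = t` for neighboring sites, `0` otherwise. -/
def kagT (L : ℕ) (t : ℝ) : Kag L → Kag L → ℝ := fun p q => if kagAdj L p q then t else 0

/-! ### Auxiliary development for the kagomé flat band -/

open Matrix

/-- Unsigned incidence matrix of the honeycomb lattice on the torus:
rows indexed by honeycomb vertices `(b, w)` (`b = false`: A-sublattice,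
`b = true`: B-sublattice), columns by bonds (= kagomé sites). -/
def kagB (L : ℕ) : Matrix (Bool × (ZMod L × ZMod L)) (Kag L) ℝ :=
  fun v e => if v.2 = (if v.1 then e.1 + dvec L e.2 else e.1) then 1 else 0

lemma sum_ind_mul_ind {α : Type*} [Fintype α] [DecidableEq α] (a b : α) :
    (∑ w : α, (if w = a then (1:ℝ) else 0) * (if w = b then 1 else 0)) =
      if a = b then 1 else 0 := by
  by_cases h : a = b
  · subst h
    simp [Finset.sum_ite_eq']
  · simp only [ite_mul, one_mul, zero_mul]
    rw [Finset.sum_ite_eq' Finset.univ a (fun w => if w = b then (1:ℝ) else 0)]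
    simp [h]

lemma sum_ind_mul {α : Type*} [Fintype α] [DecidableEq α] (a : α) (f : α → ℝ) :
    (∑ w : α, (if w = a then (1:ℝ) else 0) * f w) = f a := by
  simp only [ite_mul, one_mul, zero_mul]
  rw [Finset.sum_ite_eq' Finset.univ a f]
  simp

lemma kagB_mul (L : ℕ) [NeZero L] (p q : Kag L) :
    ((kagB L)ᵀ * kagB L) p q =
      (if p.1 = q.1 then (1:ℝ) else 0) +
        (if p.1 + dvec L p.2 = q.1 + dvec L q.2 then 1 else 0) := by
  rw [Matrix.mul_apply, Fintype.sum_prod_type, Fintype.sum_bool]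
  simp only [kagB, Matrix.transpose_apply, Bool.false_eq_true, reduceIte, if_false, if_true, ite_false, ite_true]
  rw [sum_ind_mul_ind, sum_ind_mul_ind, add_comm]

lemma kagBt_mulVec (L : ℕ) [NeZero L] (y : Bool × (ZMod L × ZMod L) → ℝ) (e : Kag L) :
    ((kagB L)ᵀ).mulVec y e = y (true, e.1 + dvec L e.2) + y (false, e.1) := by
  show (∑ v : Bool × (ZMod L × ZMod L), (kagB L)ᵀ e v * y v) = _
  rw [Fintype.sum_prod_type, Fintype.sum_bool]
  simp only [kagB, Matrix.transpose_apply, Bool.false_eq_true, reduceIte, if_false, if_true, ite_false, ite_true]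
  rw [sum_ind_mul, sum_ind_mul]

lemma dvec_injective (L : ℕ) [NeZero L] (hL : 2 ≤ L) :
    Function.Injective (dvec L) := by
  have h1 : (1 : ZMod L) ≠ 0 := by
    haveI : Fact (1 < L) := ⟨hL⟩
    exact one_ne_zero
  intro i j hij
  fin_cases i <;> fin_cases j <;> simp_all [dvec, Prod.ext_iff]

lemma kagT_eq (L : ℕ) [NeZero L] (hL : 2 ≤ L) (t : ℝ) :
    Matrix.of (kagT L t) =
      t • ((kagB L)ᵀ * kagB L) - (2 * t) • (1 : Matrix (Kag L) (Kag L) ℝ) := by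
  ext p q
  rw [Matrix.sub_apply, Matrix.smul_apply, Matrix.smul_apply, kagB_mul, Matrix.one_apply]
  show kagT L t p q = _
  by_cases hpq : p = q
  · subst hpq
    simp only [kagT, kagAdj, ne_eq, not_true_eq_false, false_and, if_false, if_pos rfl,
      smul_eq_mul]
    ring
  · have hnot : ¬ (p.1 = q.1 ∧ p.1 + dvec L p.2 = q.1 + dvec L q.2) := by
      rintro ⟨h1', h2'⟩
      apply hpq
      rw [h1'] at h2'
      exact Prod.ext h1' (dvec_injective L hL (add_left_cancel h2'))
    simp only [kagT, kagAdj, ne_eq, hpq, not_false_iff, true_and, if_neg hpq, smul_eq_mul,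
      mul_zero, sub_zero]
    rcases Classical.em (p.1 = q.1) with e1 | e1 <;>
      rcases Classical.em (p.1 + dvec L p.2 = q.1 + dvec L q.2) with e2 | e2
    · exact absurd ⟨e1, e2⟩ hnot
    · have e3 : dvec L p.2 ≠ dvec L q.2 := fun h => e2 (by rw [e1, h])
      simp [e1, e2, e3]
    · simp [e1, e2]
    · simp [e1, e2]

/-- The alternating vector spanning the kernel of the transposed incidence matrix. -/
def kagG (L : ℕ) : Bool × (ZMod L × ZMod L) → ℝ := fun v => if v.1 then -1 else 1

lemma ker_kagB_transpose (L : ℕ) [NeZero L] :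
    LinearMap.ker (Matrix.mulVecLin (kagB L)ᵀ) = Submodule.span ℝ {kagG L} := by
  apply le_antisymm
  · intro y hy
    have he : ∀ e : Kag L, y (true, e.1 + dvec L e.2) + y (false, e.1) = 0 := by
      intro e
      have h0 := LinearMap.mem_ker.mp hy
      have := congrFun h0 e
      rwa [Matrix.mulVecLin_apply, kagBt_mulVec] at this
    have h0 : ∀ u, y (true, u) = - y (false, u) := by
      intro u
      have h := he (u, (0 : Fin 3))
      have hu : u + dvec L (0 : Fin 3) = u := by
        simp [dvec, Prod.ext_iff]
      rw [hu] at h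
      linarith
    have hshift1 : ∀ u, y (false, u + ((1:ZMod L), (0:ZMod L))) = y (false, u) := by
      intro u
      have h := he (u, (1 : Fin 3))
      have hd : dvec L (1 : Fin 3) = ((1:ZMod L), (0:ZMod L)) := by
        simp [dvec]
      rw [hd, h0] at h
      linarith
    have hshift2 : ∀ u, y (false, u + ((0:ZMod L), (1:ZMod L))) = y (false, u) := by
      intro u
      have h := he (u, (2 : Fin 3))
      have hd : dvec L (2 : Fin 3) = ((0:ZMod L), (1:ZMod L)) := by
        simp [dvec]
      rw [hd, h0] at h
      linarith
    have gen : ∀ (v : ZMod L × ZMod L), (∀ w, y (false, w + v) = y (false, w)) →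
        ∀ (n : ℕ) (u : ZMod L × ZMod L), y (false, u + n • v) = y (false, u) := by
      intro v hv n
      induction n with
      | zero => intro u; simp
      | succ n ih =>
          intro u
          have h1 : u + (n + 1) • v = (u + n • v) + v := by
            rw [succ_nsmul]
            abel
          rw [h1, hv, ih]
    have hu : ∀ u : ZMod L × ZMod L, y (false, u) = y (false, 0) := by
      intro u
      obtain ⟨a, b⟩ := u
      have e1 : (a, b) = ((0 : ZMod L × ZMod L) + a.val • ((1:ZMod L), (0:ZMod L)))
          + b.val • ((0:ZMod L), (1:ZMod L)) := by
        have ha : ((a.val : ℕ) : ZMod L) = a := ZMod.natCast_zmod_val a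
        have hb : ((b.val : ℕ) : ZMod L) = b := ZMod.natCast_zmod_val b
        simp [Prod.ext_iff, Prod.smul_mk, nsmul_eq_mul, ha, hb]
      rw [e1, gen _ hshift2, gen _ hshift1]
    refine Submodule.mem_span_singleton.mpr ⟨y (false, 0), ?_⟩
    funext v
    obtain ⟨b, w⟩ := v
    cases b
    · show y (false, 0) • kagG L (false, w) = y (false, w)
      rw [hu w]
      simp [kagG]
    · show y (false, 0) • kagG L (true, w) = y (true, w)
      rw [h0 w, hu w]
      simp [kagG]
  · rw [Submodule.span_le, Set.singleton_subset_iff]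
    refine LinearMap.mem_ker.mpr ?_
    funext e
    rw [Matrix.mulVecLin_apply, kagBt_mulVec]
    simp [kagG]

lemma card_kag (L : ℕ) [NeZero L] : Fintype.card (Kag L) = 3 * L ^ 2 := by
  show Fintype.card ((ZMod L × ZMod L) × Fin 3) = 3 * L ^ 2
  simp [ZMod.card]
  ring

lemma finrank_ker_kagB (L : ℕ) [NeZero L] :
    Module.finrank ℝ (LinearMap.ker (Matrix.mulVecLin (kagB L))) = L ^ 2 + 1 := by
  have hg : kagG L ≠ 0 := by
    intro h
    have := congrFun h (false, 0)
    simp [kagG] at this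
  have h1 : Module.finrank ℝ (LinearMap.ker (Matrix.mulVecLin (kagB L)ᵀ)) = 1 := by
    rw [ker_kagB_transpose]
    exact finrank_span_singleton hg
  have cardV : Fintype.card (Bool × (ZMod L × ZMod L)) = 2 * L ^ 2 := by
    simp [ZMod.card]
    ring
  have rn1 := LinearMap.finrank_range_add_finrank_ker (Matrix.mulVecLin (kagB L)ᵀ)
  have rn2 := LinearMap.finrank_range_add_finrank_ker (Matrix.mulVecLin (kagB L))
  rw [Module.finrank_fintype_fun_eq_card, cardV, h1] at rn1
  rw [Module.finrank_fintype_fun_eq_card, card_kag] at rn2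
  have hrs : Module.finrank ℝ (LinearMap.range (Matrix.mulVecLin (kagB L)ᵀ)) =
      Module.finrank ℝ (LinearMap.range (Matrix.mulVecLin (kagB L))) := by
    simpa [Matrix.rank] using Matrix.rank_transpose (kagB L)
  rw [hrs] at rn1
  obtain ⟨n, hn⟩ : ∃ n, L ^ 2 = n := ⟨_, rfl⟩
  rw [hn] at rn1 rn2 ⊢
  omega

/-- **The flat band of the kagomé lattice.**
For the kagomé lattice on an `L × L` torus (`|Λ| = 3L²` sites) with hopping `t > 0`
between neighboring sites, the single-electron Schrödinger operator
`(φ_y) ↦ (Σ_y t_{x,y} φ_y)` has lowest eigenvalue `−2t`, with multiplicity exactly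
`M = |Λ|/3 + 1 = L² + 1`, and every other eigenvalue is strictly greater
than `−2t`. -/
theorem kagome_flat_band (L : ℕ) [NeZero L] (hL : 2 ≤ L) (t : ℝ) (ht : 0 < t) :
    Fintype.card (Kag L) = 3 * L ^ 2 ∧
    Module.finrank ℝ
        (Module.End.eigenspace (Matrix.toLin' (Matrix.of (kagT L t))) (-(2 * t))) =
      L ^ 2 + 1 ∧
    (∀ μ : ℝ, Module.End.eigenspace (Matrix.toLin' (Matrix.of (kagT L t))) μ ≠ ⊥ →
        -(2 * t) ≤ μ) ∧
    (∀ μ : ℝ, μ ≠ -(2 * t) →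
        Module.End.eigenspace (Matrix.toLin' (Matrix.of (kagT L t))) μ ≠ ⊥ →
        -(2 * t) < μ) := by
  have hmat := kagT_eq L hL t
  have hmv : ∀ x : Kag L → ℝ, (Matrix.of (kagT L t)).mulVec x
      = t • (((kagB L)ᵀ * kagB L).mulVec x) - (2 * t) • x := by
    intro x
    rw [hmat, Matrix.sub_mulVec, Matrix.smul_mulVec, Matrix.smul_mulVec,
      Matrix.one_mulVec]
  have heig : ∀ (μ : ℝ) (x : Kag L → ℝ),
      x ∈ Module.End.eigenspace (Matrix.toLin' (Matrix.of (kagT L t))) μ ↔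
        t • (((kagB L)ᵀ * kagB L).mulVec x) = (μ + 2 * t) • x := by
    intro μ x
    rw [Module.End.mem_eigenspace_iff, Matrix.toLin'_apply, hmv,
      sub_eq_iff_eq_add, ← add_smul, add_comm μ (2 * t), add_comm (2 * t) μ]
  have hbound : ∀ μ : ℝ,
      Module.End.eigenspace (Matrix.toLin' (Matrix.of (kagT L t))) μ ≠ ⊥ →
        0 ≤ μ + 2 * t := by
    intro μ hμ
    obtain ⟨x, hx, hx0⟩ := Submodule.exists_mem_ne_zero_of_ne_bot hμ
    have h := (heig μ x).mp hx
    have hdot := congrArg (fun z => dotProduct x z) h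
    simp only [dotProduct_smul, smul_eq_mul] at hdot
    have hform : dotProduct x (((kagB L)ᵀ * kagB L).mulVec x) =
        dotProduct ((kagB L).mulVec x) ((kagB L).mulVec x) := by
      rw [← Matrix.mulVec_mulVec, Matrix.dotProduct_mulVec, Matrix.vecMul_transpose]
    rw [hform] at hdot
    have hq : 0 ≤ dotProduct ((kagB L).mulVec x) ((kagB L).mulVec x) := by
      apply Finset.sum_nonneg
      intro i _
      exact mul_self_nonneg _
    have hp : 0 < dotProduct x x := by
      rcases lt_or_eq_of_le (Finset.sum_nonneg fun i _ => mul_self_nonneg (x i)) with h' | h'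
      · exact h'
      · exact absurd (dotProduct_self_eq_zero.mp h'.symm) hx0
    nlinarith
  have hker : Module.End.eigenspace (Matrix.toLin' (Matrix.of (kagT L t))) (-(2 * t)) =
      LinearMap.ker (Matrix.mulVecLin (kagB L)) := by
    rw [← Matrix.ker_mulVecLin_transpose_mul_self]
    ext x
    rw [heig, LinearMap.mem_ker, Matrix.mulVecLin_apply]
    constructor
    · intro h
      have h2 : t • ((kagB L)ᵀ * kagB L).mulVec x = 0 := by
        rw [h]
        simp
      rcases smul_eq_zero.mp h2 with h3 | h3
      · exact absurd h3 (ne_of_gt ht)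
      · exact h3
    · intro h
      rw [h, smul_zero]
      simp
  refine ⟨card_kag L, ?_, ?_, ?_⟩
  · rw [hker]
    exact finrank_ker_kagB L
  · intro μ hμ
    have := hbound μ hμ
    linarith
  · intro μ hne hμ
    have h := hbound μ hμ
    rcases lt_or_eq_of_le h with h' | h'
    · linarith
    · exact absurd (by linarith : μ = -(2 * t)) hne

end Hubbard
end
end
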